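/- There is a unique p₀ in (1/2, 1) such that (p₀/(4p₀-2))·ln(p₀/(1-p₀)) = 1; moreover p₀ lies in the interval (0.83, 0.84). -/

import Mathlib

set_option maxRecDepth 4000

open Real Set

noncomputable def gfun (p : ℝ) : ℝ := p * Real.log (p / (1 - p)) - (4 * p - 2)

lemma hasDerivAt_gfun {x : ℝ} (h0 : 0 < x) (h1 : x < 1) :
    HasDerivAt gfun (Real.log (x / (1 - x)) + 1 / (1 - x) - 4) x := by
  have hx1 : (1:ℝ) - x ≠ 0 := by linarith
  have hu : HasDerivAt (fun p : ℝ => p / (1 - p)) ((1 - x + x) / (1 - x) ^ 2) x := by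
    have := (hasDerivAt_id x).div ((hasDerivAt_const x (1:ℝ)).sub (hasDerivAt_id x)) hx1
    refine HasDerivAt.congr_deriv this ?_
    simp only [id_eq, Pi.sub_apply]
    ring
  have hne : x / (1 - x) ≠ 0 := by positivity
  have hlog := hu.log hne
  have hmul := (hasDerivAt_id x).mul hlog
  have hlin : HasDerivAt (fun p : ℝ => 4 * p - 2) 4 x := by
    simpa using ((hasDerivAt_id x).const_mul (4:ℝ)).sub_const 2
  have := hmul.sub hlin
  refine HasDerivAt.congr_deriv this ?_
  simp only [id_eq, Pi.sub_apply]
  field_simp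
  ring

lemma hasDerivAt_phi {x : ℝ} (h0 : 0 < x) (h1 : x < 1) :
    HasDerivAt (fun p : ℝ => Real.log (p / (1 - p)) + 1 / (1 - p) - 4)
      (1 / (x * (1 - x)) + 1 / (1 - x) ^ 2) x := by
  have hx1 : (1:ℝ) - x ≠ 0 := by linarith
  have hu : HasDerivAt (fun p : ℝ => p / (1 - p)) ((1 - x + x) / (1 - x) ^ 2) x := by
    have := (hasDerivAt_id x).div ((hasDerivAt_const x (1:ℝ)).sub (hasDerivAt_id x)) hx1
    refine HasDerivAt.congr_deriv this ?_
    simp only [id_eq, Pi.sub_apply]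
    ring
  have hne : x / (1 - x) ≠ 0 := by positivity
  have hlog := hu.log hne
  have hinv : HasDerivAt (fun p : ℝ => 1 / (1 - p)) (1 / (1 - x) ^ 2) x := by
    have h := ((hasDerivAt_const x (1:ℝ)).sub (hasDerivAt_id x)).inv hx1
    simp only [one_div]
    refine HasDerivAt.congr_deriv h ?_
    simp only [id_eq, Pi.sub_apply]
    field_simp
    norm_num
  have := (hlog.add hinv).sub_const 4
  refine HasDerivAt.congr_deriv this ?_
  field_simp
  ring

lemma strictConvex_gfun : StrictConvexOn ℝ (Set.Ico (1/2 : ℝ) 1) gfun := by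
  apply strictConvexOn_of_deriv2_pos (convex_Ico _ _)
  · -- continuity
    apply ContinuousOn.sub
    · apply continuousOn_id.mul
      apply ContinuousOn.log
      · exact (continuousOn_id.div (continuousOn_const.sub continuousOn_id)
          (fun x hx => by simp only [mem_Ico] at hx; intro h; linarith [hx.2, sub_eq_zero.mp h]))
      · intro x hx
        simp only [mem_Ico] at hx
        have : 0 < x / (1 - x) := by
          apply div_pos <;> linarith
        exact ne_of_gt this
    · fun_prop
  · intro x hx
    rw [interior_Ico] at hx
    obtain ⟨hx1, hx2⟩ := hx
    have h0 : 0 < x := by linarith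
    have heq : deriv (deriv gfun) x =
        deriv (fun p : ℝ => Real.log (p / (1 - p)) + 1 / (1 - p) - 4) x := by
      apply Filter.EventuallyEq.deriv_eq
      filter_upwards [Ioo_mem_nhds hx1 hx2] with y hy
      exact (hasDerivAt_gfun (by linarith [hy.1]) hy.2).deriv
    have : deriv^[2] gfun x = 1 / (x * (1 - x)) + 1 / (1 - x) ^ 2 := by
      simp only [Function.iterate_succ, Function.iterate_zero, Function.comp_apply, id]
      rw [heq, (hasDerivAt_phi h0 hx2).deriv]
    rw [this]
    have : (0:ℝ) < 1 - x := by linarith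
    positivity

lemma gfun_half : gfun (1/2) = 0 := by
  simp [gfun]
  norm_num

lemma exp_lower : (83:ℝ)/17 < Real.exp (132/83) := by
  have h1 : (83:ℝ)/17 < (10657/10624:ℝ)^512 := by
    rw [show (512:ℕ) = 256 * 2 from rfl, pow_mul]; norm_num
  have h2 : ((10657:ℝ)/10624)^512 ≤ Real.exp (33/10624) ^ 512 := by
    apply pow_le_pow_left₀ (by norm_num)
    have := Real.add_one_le_exp (33/10624 : ℝ)
    linarith
  have h3 : Real.exp (132/83 : ℝ) = Real.exp (33/10624 : ℝ) ^ 512 := by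
    rw [show (132/83 : ℝ) = (512:ℕ) * (33/10624) by push_cast; norm_num, Real.exp_nat_mul]
  rw [h3]
  exact lt_of_lt_of_le h1 h2

lemma exp_upper : Real.exp (34/21 : ℝ) < 21/4 := by
  have h1 : (655/672:ℝ) ≤ Real.exp (-(17/672)) := by
    have := Real.add_one_le_exp (-(17/672) : ℝ)
    linarith
  have h2 : ((655:ℝ)/672)^64 ≤ Real.exp (-(17/672)) ^ 64 :=
    pow_le_pow_left₀ (by norm_num) h1 64
  have h3 : Real.exp (-(34/21) : ℝ) = Real.exp (-(17/672) : ℝ) ^ 64 := by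
    rw [show (-(34/21) : ℝ) = (64:ℕ) * (-(17/672)) by push_cast; norm_num, Real.exp_nat_mul]
  have h4 : ((655:ℝ)/672)^64 ≤ (Real.exp (34/21))⁻¹ := by
    rw [← Real.exp_neg, h3]; exact h2
  have hp : (0:ℝ) < (655/672:ℝ)^64 := by positivity
  have h5 : Real.exp (34/21) ≤ ((655/672:ℝ)^64)⁻¹ := by
    rw [← one_div, le_div_iff₀ hp]
    calc Real.exp (34/21) * (655/672:ℝ)^64 ≤ Real.exp (34/21) * (Real.exp (34/21))⁻¹ :=
          mul_le_mul_of_nonneg_left h4 (Real.exp_pos _).le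
      _ = 1 := mul_inv_cancel₀ (Real.exp_pos _).ne'
  have h6 : (((655:ℝ)/672)^64)⁻¹ < 21/4 := by rw [← inv_pow]; norm_num
  linarith

lemma g_neg : gfun 0.83 < 0 := by
  have hlog : Real.log ((83:ℝ)/17) < 132/83 := by
    rw [Real.log_lt_iff_lt_exp (by norm_num)]
    exact exp_lower
  have : (0.83:ℝ) / (1 - 0.83) = 83/17 := by norm_num
  simp only [gfun, this]
  nlinarith [hlog]

lemma g_pos : 0 < gfun 0.84 := by
  have hlog : (34:ℝ)/21 < Real.log ((21:ℝ)/4) := by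
    rw [Real.lt_log_iff_exp_lt (by norm_num)]
    exact exp_upper
  have : (0.84:ℝ) / (1 - 0.84) = 21/4 := by norm_num
  simp only [gfun, this]
  nlinarith [hlog]

lemma g_unique {a b : ℝ} (ha : a ∈ Set.Ioo (1/2 : ℝ) 1) (hb : b ∈ Set.Ioo (1/2 : ℝ) 1)
    (hga : gfun a = 0) (hgb : gfun b = 0) : a = b := by
  rcases lt_trichotomy a b with h | h | h
  · exfalso
    have hd : (0:ℝ) < b - 1/2 := by linarith [hb.1]
    have key := strictConvex_gfun.2
      (show (1/2:ℝ) ∈ Set.Ico (1/2:ℝ) 1 from ⟨le_refl _, by norm_num⟩)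
      (show b ∈ Set.Ico (1/2:ℝ) 1 from ⟨hb.1.le, hb.2⟩)
      (show (1/2:ℝ) ≠ b by intro he; linarith [hb.1])
      (show (0:ℝ) < (b - a)/(b - 1/2) from div_pos (by linarith) hd)
      (show (0:ℝ) < (a - 1/2)/(b - 1/2) from div_pos (by linarith [ha.1]) hd)
      (show (b - a)/(b - 1/2) + (a - 1/2)/(b - 1/2) = 1 by rw [← add_div, div_eq_one_iff_eq hd.ne']; ring)
    rw [gfun_half, hgb] at key
    simp only [smul_eq_mul, mul_zero, add_zero] at key
    have harg : (b - a)/(b - 1/2) * (1/2 : ℝ) + (a - 1/2)/(b - 1/2) * b = a := by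
      rw [div_mul_eq_mul_div, div_mul_eq_mul_div, ← add_div, div_eq_iff hd.ne']
      ring
    rw [harg, hga] at key
    exact lt_irrefl _ key
  · exact h
  · exfalso
    have hd : (0:ℝ) < a - 1/2 := by linarith [ha.1]
    have key := strictConvex_gfun.2
      (show (1/2:ℝ) ∈ Set.Ico (1/2:ℝ) 1 from ⟨le_refl _, by norm_num⟩)
      (show a ∈ Set.Ico (1/2:ℝ) 1 from ⟨ha.1.le, ha.2⟩)
      (show (1/2:ℝ) ≠ a by intro he; linarith [ha.1])
      (show (0:ℝ) < (a - b)/(a - 1/2) from div_pos (by linarith) hd)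
      (show (0:ℝ) < (b - 1/2)/(a - 1/2) from div_pos (by linarith [hb.1]) hd)
      (show (a - b)/(a - 1/2) + (b - 1/2)/(a - 1/2) = 1 by rw [← add_div, div_eq_one_iff_eq hd.ne']; ring)
    rw [gfun_half, hga] at key
    simp only [smul_eq_mul, mul_zero, add_zero] at key
    have harg : (a - b)/(a - 1/2) * (1/2 : ℝ) + (b - 1/2)/(a - 1/2) * a = b := by
      rw [div_mul_eq_mul_div, div_mul_eq_mul_div, ← add_div, div_eq_iff hd.ne']
      ring
    rw [harg, hgb] at key
    exact lt_irrefl _ key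

theorem exists_unique_p0 :
    ∃ p₀ : ℝ, p₀ ∈ Set.Ioo (1/2 : ℝ) 1 ∧
      p₀ / (4 * p₀ - 2) * Real.log (p₀ / (1 - p₀)) = 1 ∧
      p₀ ∈ Set.Ioo (0.83 : ℝ) 0.84 ∧
      ∀ p ∈ Set.Ioo (1/2 : ℝ) 1,
        p / (4 * p - 2) * Real.log (p / (1 - p)) = 1 → p = p₀ := by
  have hcont : ContinuousOn gfun (Set.Icc (0.83 : ℝ) 0.84) := by
    apply ContinuousOn.sub
    · apply continuousOn_id.mul
      apply ContinuousOn.log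
      · exact (continuousOn_id.div (continuousOn_const.sub continuousOn_id)
          (fun x hx => by simp only [mem_Icc] at hx; intro h; norm_num at hx; linarith [hx.2, sub_eq_zero.mp h]))
      · intro x hx
        simp only [mem_Icc] at hx
        norm_num at hx
        have : 0 < x / (1 - x) := by apply div_pos <;> linarith
        exact ne_of_gt this
    · fun_prop
  have hivt := intermediate_value_Ioo (by norm_num : (0.83:ℝ) ≤ 0.84) hcont
  have h0mem : (0:ℝ) ∈ Set.Ioo (gfun 0.83) (gfun 0.84) := ⟨g_neg, g_pos⟩
  obtain ⟨p₀, hp₀mem, hp₀⟩ := hivt h0mem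
  have hmem : p₀ ∈ Set.Ioo (1/2 : ℝ) 1 := by
    constructor
    · have := hp₀mem.1; norm_num at this ⊢; linarith
    · have := hp₀mem.2; norm_num at this; linarith
  have h4 : 0 < 4 * p₀ - 2 := by have := hmem.1; norm_num at this; linarith
  refine ⟨p₀, hmem, ?_, hp₀mem, ?_⟩
  · have : p₀ * Real.log (p₀ / (1 - p₀)) = 4 * p₀ - 2 := by
      have := hp₀; simp only [gfun] at this; linarith
    rw [div_mul_eq_mul_div, div_eq_one_iff_eq h4.ne']
    linarith [this]
  · intro p hp heq
    have h4p : 0 < 4 * p - 2 := by have := hp.1; norm_num at this; linarith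
    have hgp : gfun p = 0 := by
      simp only [gfun]
      have : p / (4 * p - 2) * Real.log (p / (1 - p)) * (4 * p - 2) = 1 * (4 * p - 2) := by
        rw [heq]
      rw [div_mul_eq_mul_div, div_mul_cancel₀ _ h4p.ne'] at this
      linarith
    exact g_unique hp hmem hgp hp₀
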